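/- Let n ≥ 2 and let b_2 ≥ b_3 ≥ … ≥ b_n ≥ 0 be a non-increasing sequence of nonnegative real numbers. Then ∑_{i=2}^{n} b_i ≤ log₂(2n) · max_{i=2,…,n} i·b_i. -/

import Mathlib

/-- Harmonic tail bound: `∑_{i=2}^n 1/i ≤ log n`. -/
lemma harmonic_tail_le_log (n : ℕ) (hn : 1 ≤ n) :
    ∑ i ∈ Finset.Icc 2 n, (1 / (i : ℝ)) ≤ Real.log n := by
  induction n with
  | zero => omega
  | succ m ih =>
    rcases Nat.eq_or_lt_of_le hn with h | h
    · simp [← h]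
    · have hm : 1 ≤ m := by omega
      have hsum : ∑ i ∈ Finset.Icc 2 (m + 1), (1 / (i : ℝ))
          = (∑ i ∈ Finset.Icc 2 m, (1 / (i : ℝ))) + 1 / ((m + 1 : ℕ) : ℝ) :=
        Finset.sum_Icc_succ_top (by omega) _
      rw [hsum]
      push_cast
      have hmpos : (0 : ℝ) < m := by exact_mod_cast hm
      have hm1pos : (0 : ℝ) < m + 1 := by positivity
      have hlog : Real.log ((m : ℝ) / (m + 1)) ≤ (m : ℝ) / (m + 1) - 1 :=
        Real.log_le_sub_one_of_pos (by positivity)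
      have hdiv : Real.log ((m : ℝ) / (m + 1)) = Real.log m - Real.log (m + 1) :=
        Real.log_div (ne_of_gt hmpos) (ne_of_gt hm1pos)
      have hfrac : (m : ℝ) / (m + 1) - 1 = -(1 / (m + 1)) := by
        field_simp
        ring
      have key : Real.log m + 1 / (m + 1 : ℝ) ≤ Real.log (m + 1) := by
        rw [hdiv] at hlog
        rw [hfrac] at hlog
        linarith
      calc (∑ i ∈ Finset.Icc 2 m, (1 / (i : ℝ))) + 1 / (m + 1 : ℝ)
          ≤ Real.log m + 1 / (m + 1 : ℝ) := by linarith [ih hm]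
        _ ≤ Real.log (m + 1) := key

/-- **Sum-form is bounded by `log₂(2n)` times the max-form (Audibert–Bubeck–Munos).**
For `n ≥ 2` and a non-increasing sequence `b_2 ≥ b_3 ≥ … ≥ b_n ≥ 0` of nonnegative reals,
`∑_{i=2}^n b_i ≤ log₂(2n) · max_{i=2,…,n} i·b_i`. -/
theorem sum_le_log_mul_max
    (n : ℕ) (hn : 2 ≤ n) (b : ℕ → ℝ)
    (hanti : ∀ i j, 2 ≤ i → i ≤ j → j ≤ n → b j ≤ b i)
    (hnonneg : ∀ i, 2 ≤ i → i ≤ n → 0 ≤ b i) :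
    ∑ i ∈ Finset.Icc 2 n, b i ≤
      Real.logb 2 (2 * n) *
        (Finset.Icc 2 n).sup' (Finset.nonempty_Icc.mpr hn) (fun i => (i : ℝ) * b i) := by
  set M := (Finset.Icc 2 n).sup' (Finset.nonempty_Icc.mpr hn) (fun i => (i : ℝ) * b i) with hM
  have hMge : ∀ i ∈ Finset.Icc 2 n, (i : ℝ) * b i ≤ M := fun i hi =>
    Finset.le_sup' (fun j : ℕ => (j : ℝ) * b j) hi
  have hMnn : 0 ≤ M := by
    have h2 : (2 : ℕ) ∈ Finset.Icc 2 n := by simp [hn]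
    have h := hMge 2 h2
    have hb : 0 ≤ b 2 := hnonneg 2 le_rfl hn
    push_cast at h
    nlinarith
  have step1 : ∑ i ∈ Finset.Icc 2 n, b i ≤ ∑ i ∈ Finset.Icc 2 n, M * (1 / (i : ℝ)) := by
    apply Finset.sum_le_sum
    intro i hi
    simp only [Finset.mem_Icc] at hi
    have hipos : (0 : ℝ) < i := by
      have : (2:ℕ) ≤ i := hi.1; positivity
    have := hMge i (by simp [Finset.mem_Icc]; omega)
    rw [mul_one_div, le_div_iff₀ hipos, mul_comm]
    exact this
  have step2 : ∑ i ∈ Finset.Icc 2 n, M * (1 / (i : ℝ)) ≤ M * Real.log n := by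
    rw [← Finset.mul_sum]
    exact mul_le_mul_of_nonneg_left (harmonic_tail_le_log n (by omega)) hMnn
  have hlog2 : Real.log n ≤ Real.logb 2 (2 * n) := by
    have hnpos : (0:ℝ) < n := by positivity
    have hlogn : 0 ≤ Real.log n := Real.log_nonneg (by exact_mod_cast hn.trans' (by norm_num))
    have hlog2pos : 0 < Real.log 2 := Real.log_pos (by norm_num)
    have hlog2le1 : Real.log 2 ≤ 1 := by
      have := Real.log_le_sub_one_of_pos (show (0:ℝ) < 2 by norm_num); linarith
    rw [Real.logb, Real.log_mul (by norm_num) (ne_of_gt hnpos)]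
    rw [le_div_iff₀ hlog2pos]
    nlinarith
  calc ∑ i ∈ Finset.Icc 2 n, b i ≤ M * Real.log n := step1.trans step2
    _ ≤ M * Real.logb 2 (2 * n) := mul_le_mul_of_nonneg_left hlog2 hMnn
    _ = Real.logb 2 (2 * n) * M := mul_comm _ _
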